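/- In the free fusion ring ℤM over a fusion set S, for a single letter s ∈ S and any word w = w₁…w_k with k ≥ 1, one has a_s · a_w = a_{sw} + a_{(s·w₁)w₂…w_k} + δ_{s̄, w₁} a_{w₂…w_k}, where the middle term is omitted if s·w₁ = ∅. Consequently, multiplication by a generator a_s increases the maximal word length of the support by exactly one. -/

import Mathlib

/-- Conjugation of a word: reverse the word and conjugate each letter. -/
def wconj {S : Type*} (c : S → S) (w : List S) : List S :=
  (w.map c).reverse

/-- Fusion of two words: fuse last letter of `w` with first letter of `w'`;
empty if either word is empty or the letter fusion is empty. -/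
def wfuse {S : Type*} (f : S → S → Option S) (w w' : List S) : Option (List S) :=
  match w.getLast?, w'.head? with
  | some a, some b => (f a b).map (fun r => w.dropLast ++ r :: w'.tail)
  | _, _ => none

/-- In the free fusion ring over a fusion set `S`, for a letter `s` and a
nonempty word `w = w₁…w_k` one has
`a_s · a_w = a_{sw} + a_{(s·w₁)w₂…w_k} + δ_{s̄,w₁} a_{w₂…w_k}` (the middle
term omitted when `s·w₁ = ∅`); consequently multiplication by a generator
increases the maximal word length of the support by exactly one. -/
theorem freeFusionRing_letter_mul {S : Type*} [DecidableEq S]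
    (f : S → S → Option S) (c : S → S)
    (hassoc : ∀ s t r : S, (f s t).bind (fun x => f x r) = (f t r).bind (fun x => f s x))
    (hinv : ∀ s : S, c (c s) = s)
    (hcompat : ∀ s₁ s₂ s₃ : S, f s₁ s₂ = some (c s₃) ↔ f s₂ s₃ = some (c s₁))
    {R : Type*} [Ring R] (b : Module.Basis (List S) ℤ R)
    (hone : (b [] : R) = 1)
    (hmul : ∀ w w' : List S, (b w : R) * b w' =
      ∑ n ∈ Finset.range (min w.length w'.length + 1),
        if w'.take n = wconj c (w.drop (w.length - n)) then
          (b (w.take (w.length - n) ++ w'.drop n) +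
            ((wfuse f (w.take (w.length - n)) (w'.drop n)).elim 0 (fun u => (b u : R))))
        else 0) :
    (∀ (s w₁ : S) (t : List S), (b [s] : R) * b (w₁ :: t) =
      b (s :: w₁ :: t) + ((f s w₁).elim 0 (fun r => (b (r :: t) : R))) +
        (if c s = w₁ then (b t : R) else 0)) ∧
    (∀ (s : S) (x : R), x ≠ 0 →
      ((b.repr ((b [s] : R) * x)).support.sup List.length) =
        ((b.repr x).support.sup List.length) + 1) := by
  have key : ∀ (s w₁ : S) (t : List S), (b [s] : R) * b (w₁ :: t) =
      b (s :: w₁ :: t) + ((f s w₁).elim 0 (fun r => (b (r :: t) : R))) +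
        (if c s = w₁ then (b t : R) else 0) := by
    intro s w₁ t
    have h := hmul [s] (w₁ :: t)
    simp only [List.length_cons, List.length_nil, Nat.zero_add] at h
    rw [show (1 ⊓ (t.length + 1)) = 1 from Nat.min_eq_left (Nat.succ_le_succ (Nat.zero_le _))] at h
    rw [Finset.sum_range_succ, Finset.sum_range_succ, Finset.sum_range_zero] at h
    simp only [wconj, wfuse] at h
    simp at h
    rw [h]
    rcases hfs : f s w₁ with _ | r <;> by_cases hc : c s = w₁ <;>
      simp [hfs, hc, show (w₁ = c s) ↔ (c s = w₁) from eq_comm]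
  refine ⟨key, ?_⟩
  intro s x hx
  have hnil : (b [s] : R) * b [] = b [s] := by
    have h := hmul [s] []
    simp [wconj, wfuse] at h
    simpa using h
  -- lemma A: top coefficient
  have hA : ∀ (w u : List S), w.length < u.length →
      b.repr ((b [s] : R) * b w) u = if u = s :: w then 1 else 0 := by
    intro w u hlen
    cases w with
    | nil =>
      rw [hnil, b.repr_self]
      simp [Finsupp.single_apply, eq_comm]
    | cons w₁ t =>
      simp only [List.length_cons] at hlen
      have ne2 : t ≠ u := by rintro rfl; omega
      rw [key s w₁ t]
      rcases hfs : f s w₁ with _ | r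
      · by_cases hc : c s = w₁ <;>
          simp [hc, Finsupp.single_apply, ne2, Ne.symm ne2, eq_comm]
      · have ne1 : r :: t ≠ u := by rintro rfl; simp at hlen
        by_cases hc : c s = w₁ <;>
          simp [hc, Finsupp.single_apply, ne1, Ne.symm ne1, ne2, Ne.symm ne2, eq_comm]
  -- lemma B: support bound
  have hB : ∀ (w u : List S), b.repr ((b [s] : R) * b w) u ≠ 0 → u.length ≤ w.length + 1 := by
    intro w u h
    by_contra hlen
    push_neg at hlen
    rw [hA w u (by omega)] at h
    rw [if_neg (by rintro rfl; simp at hlen)] at h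
    exact h rfl
  set g := b.repr x with hg
  have hgne : g ≠ 0 := fun h0 => hx (b.repr.injective (by rw [← hg, h0, map_zero]))
  have hsupne : g.support.Nonempty := Finsupp.support_nonempty_iff.mpr hgne
  obtain ⟨w₀, hw₀mem, hw₀⟩ := Finset.exists_mem_eq_sup _ hsupne List.length
  have hxsum : x = ∑ w ∈ g.support, g w • (b w : R) := by
    conv_lhs => rw [← b.linearCombination_repr x]
    rw [Finsupp.linearCombination_apply, Finsupp.sum]
  have hcoeff : ∀ u, b.repr ((b [s] : R) * x) u =
      ∑ w ∈ g.support, g w * b.repr ((b [s] : R) * b w) u := by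
    intro u
    conv_lhs => rw [hxsum, Finset.mul_sum]
    rw [map_sum, Finset.sum_apply']
    refine Finset.sum_congr rfl fun w _ => ?_
    rw [mul_smul_comm, map_smul, Finsupp.smul_apply, smul_eq_mul]
  have hw₀ne : g w₀ ≠ 0 := Finsupp.mem_support_iff.mp hw₀mem
  have htop : b.repr ((b [s] : R) * x) (s :: w₀) = g w₀ := by
    rw [hcoeff, Finset.sum_eq_single w₀]
    · rw [hA w₀ (s :: w₀) (by simp), if_pos rfl, mul_one]
    · intro w hw hne
      have hwle : w.length ≤ g.support.sup List.length := Finset.le_sup hw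
      rw [hA w (s :: w₀) (by simp; omega), if_neg (by simp; rintro rfl; exact hne rfl),
        mul_zero]
    · intro h; exact absurd hw₀mem h
  apply le_antisymm
  · apply Finset.sup_le
    intro u hu
    have hune := Finsupp.mem_support_iff.mp hu
    by_contra hlen
    push_neg at hlen
    apply hune
    rw [hcoeff]
    refine Finset.sum_eq_zero fun w hw => ?_
    have hwle : w.length ≤ g.support.sup List.length := Finset.le_sup hw
    have : b.repr ((b [s] : R) * b w) u = 0 := by
      by_contra h
      have := hB w u h
      omega
    rw [this, mul_zero]
  · have hmem : s :: w₀ ∈ (b.repr ((b [s] : R) * x)).support :=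
      Finsupp.mem_support_iff.mpr (by rw [htop]; exact hw₀ne)
    have := Finset.le_sup (f := List.length) hmem
    simp only [List.length_cons] at this
    omega
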